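/- Let ε > 0 and let f : ℝ → ℝ be a function satisfying |f(x + y) − f(x) − f(y)| ≤ ε for all x, y ∈ ℝ, and such that the mapping x ↦ f(arcosh(x)) − (1/√(x² − 1))·f(x) is locally bounded on (1, ∞), where arcosh(x) = ln(x + √(x² − 1)) is the inverse of cosh restricted to [0, ∞). Then there exist a real number λ and a real derivation χ : ℝ → ℝ such that |f(x) − (χ(x) + λ·x)| ≤ ε for all x ∈ ℝ. -/

import Mathlib

open Real Set Filter


open Real Set

/-- A function `φ` is locally bounded on a set `s` if every point of `s` has a
neighborhood (within `s`) on which `φ` is bounded. -/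
def LocallyBoundedOn (φ : ℝ → ℝ) (s : Set ℝ) : Prop :=
  ∀ x ∈ s, ∃ C : ℝ, ∀ᶠ y in nhdsWithin x s, |φ y| ≤ C

/-- A real-valued function is *regular* on its domain `s` if it is locally bounded,
or continuous, or Lebesgue measurable on `s`. -/
def RegularOn (φ : ℝ → ℝ) (s : Set ℝ) : Prop :=
  LocallyBoundedOn φ s ∨ ContinuousOn φ s ∨ Measurable (s.restrict φ)

/-- A real derivation: an additive function satisfying the Leibniz rule. -/
def IsRealDerivation (χ : ℝ → ℝ) : Prop :=
  (∀ x y : ℝ, χ (x + y) = χ x + χ y) ∧ (∀ x y : ℝ, χ (x * y) = x * χ y + y * χ x)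


lemma rat_smul_of_additive (g : ℝ → ℝ) (hg : ∀ x y, g (x + y) = g x + g y)
    (q : ℚ) (x : ℝ) : g ((q : ℝ) * x) = (q : ℝ) * g x := by
  have := map_ratCast_smul (AddMonoidHom.mk' g hg) ℝ ℝ q x
  simpa [smul_eq_mul] using this

lemma linear_of_additive_bounded (g : ℝ → ℝ) (hg : ∀ x y, g (x + y) = g x + g y)
    (C δ : ℝ) (hδ : 0 < δ) (hb : ∀ x, |x| < δ → |g x| ≤ C) :
    ∀ x, g x = g 1 * x := by
  set e : ℝ → ℝ := fun x => g x - g 1 * x with he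
  have he_add : ∀ x y, e (x + y) = e x + e y := by
    intro x y; simp only [he, hg]; ring
  have he_q : ∀ q : ℚ, e (q : ℝ) = 0 := by
    intro q
    have := rat_smul_of_additive g hg q 1
    simp only [he, mul_one] at this ⊢
    rw [this]; ring
  have he_bd : ∀ x, |e x| ≤ C + |g 1| * δ := by
    intro x
    obtain ⟨q, hq⟩ := exists_rat_near x hδ
    have h1 : e x = e (x - (q : ℝ)) := by
      have := he_add (x - q) q
      simp only [sub_add_cancel] at this
      rw [this, he_q]; ring
    rw [h1, he]
    simp only
    calc |g (x - q) - g 1 * (x - q)| ≤ |g (x - q)| + |g 1| * |x - q| := by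
          refine (abs_sub _ _).trans (le_of_eq ?_)
          rw [abs_mul]
      _ ≤ C + |g 1| * δ := by
          gcongr <;> first
            | exact hb _ hq
            | exact hq.le
  have he_nat : ∀ (n : ℕ) (x : ℝ), e (n * x) = n * e x := by
    intro n x
    induction n with
    | zero =>
      have h0 := he_add 0 0
      simp only [add_zero] at h0
      simp only [Nat.cast_zero, zero_mul]
      linarith
    | succ n ih =>
      push_cast
      rw [add_mul, one_mul, he_add, ih]; ring
  have hC : 0 ≤ C := le_trans (abs_nonneg _) (hb 0 (by simpa using hδ))
  have hC' : 0 ≤ C + |g 1| * δ := by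
    have := mul_nonneg (abs_nonneg (g 1)) hδ.le
    linarith
  intro x
  have hzero : e x = 0 := by
    by_contra hne
    have hpos : 0 < |e x| := abs_pos.mpr hne
    obtain ⟨n, hn⟩ := exists_nat_gt ((C + |g 1| * δ) / |e x|)
    have hn1 : (C + |g 1| * δ) / |e x| < n := hn
    have := he_bd (n * x)
    rw [he_nat n x, abs_mul, abs_of_nonneg (by positivity : (0:ℝ) ≤ (n:ℝ))] at this
    have hn0 : (0:ℝ) < n := lt_of_le_of_lt (div_nonneg hC' (abs_nonneg _)) hn1
    have : (n : ℝ) ≤ (C + |g 1| * δ) / |e x| := (le_div_iff₀ hpos).mpr this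
    linarith
  have : g x - g 1 * x = 0 := hzero
  linarith

lemma hyers (ε : ℝ) (hε : 0 < ε) (f : ℝ → ℝ)
    (hf : ∀ x y : ℝ, |f (x + y) - f x - f y| ≤ ε) :
    ∃ g : ℝ → ℝ, (∀ x y, g (x + y) = g x + g y) ∧ ∀ x, |f x - g x| ≤ ε := by
  set a : ℝ → ℕ → ℝ := fun x n => f (2 ^ n * x) / 2 ^ n with ha
  have key : ∀ y : ℝ, |f (2 * y) - 2 * f y| ≤ ε := by
    intro y
    have := hf y y
    have h2 : y + y = 2 * y := by ring
    rw [h2] at this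
    calc |f (2*y) - 2 * f y| = |f (2*y) - f y - f y| := by ring_nf
      _ ≤ ε := this
  have hstep : ∀ x n, |a x (n + 1) - a x n| ≤ ε / 2 ^ (n + 1) := by
    intro x n
    have h1 : a x (n+1) - a x n = (f (2 * (2 ^ n * x)) - 2 * f (2 ^ n * x)) / 2 ^ (n+1) := by
      simp only [ha]
      field_simp
      ring_nf
    rw [h1, abs_div, abs_of_pos (by positivity : (0:ℝ) < 2 ^ (n+1))]
    exact div_le_div_of_nonneg_right (key _) (by positivity) |>.trans le_rfl
  have hcauchy : ∀ x, CauchySeq (a x) := by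
    intro x
    apply cauchySeq_of_le_geometric (r := 1/2) (C := ε) (by norm_num)
    intro n
    rw [Real.dist_eq, abs_sub_comm]
    calc |a x (n+1) - a x n| ≤ ε / 2 ^ (n+1) := hstep x n
      _ ≤ ε * (1/2) ^ n := by
          rw [div_le_iff₀ (by positivity)]
          rw [mul_assoc]
          have : (1/2 : ℝ) ^ n * 2 ^ (n+1) = 2 := by
            rw [pow_succ, one_div, inv_pow]
            field_simp
          rw [this]
          linarith
  have hlim : ∀ x, ∃ L, Tendsto (a x) atTop (nhds L) :=
    fun x => cauchySeq_tendsto_of_complete (hcauchy x)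
  choose g hg using hlim
  refine ⟨g, ?_, ?_⟩
  · intro x y
    have hsum : ∀ n, |a (x + y) n - a x n - a y n| ≤ ε / 2 ^ n := by
      intro n
      have h1 : (2:ℝ) ^ n * (x + y) = 2 ^ n * x + 2 ^ n * y := by ring
      have := hf (2 ^ n * x) (2 ^ n * y)
      rw [← h1] at this
      simp only [ha, ← h1]
      rw [div_sub_div_same, div_sub_div_same, abs_div,
        abs_of_pos (by positivity : (0:ℝ) < 2 ^ n)]
      exact div_le_div_of_nonneg_right this (by positivity)
    have ht : Tendsto (fun n => |a (x+y) n - a x n - a y n|) atTop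
        (nhds |g (x+y) - g x - g y|) :=
      (((hg (x+y)).sub (hg x)).sub (hg y)).abs
    have ht0 : Tendsto (fun n : ℕ => ε / 2 ^ n) atTop (nhds 0) := by
      simpa using tendsto_const_nhds.div_atTop (tendsto_pow_atTop_atTop_of_one_lt (by norm_num : (1:ℝ) < 2))
    have : |g (x+y) - g x - g y| ≤ 0 :=
      le_of_tendsto_of_tendsto' ht ht0 hsum
    have h0 : g (x+y) - g x - g y = 0 := abs_eq_zero.mp (le_antisymm this (abs_nonneg _))
    linarith [h0]
  · intro x
    have hbd : ∀ n, |a x n - f x| ≤ ε * (1 - (1/2 : ℝ) ^ n) := by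
      intro n
      induction n with
      | zero => simp [ha]
      | succ n ih =>
        calc |a x (n+1) - f x| ≤ |a x (n+1) - a x n| + |a x n - f x| := by
              have := abs_add_le (a x (n+1) - a x n) (a x n - f x)
              simpa using this
          _ ≤ ε / 2 ^ (n+1) + ε * (1 - (1/2:ℝ) ^ n) := add_le_add (hstep x n) ih
          _ = ε * (1 - (1/2:ℝ) ^ (n+1)) := by
              rw [pow_succ, pow_succ, one_div, inv_pow]
              field_simp
              ring
    have ht : Tendsto (fun n => |a x n - f x|) atTop (nhds |g x - f x|) :=
      ((hg x).sub tendsto_const_nhds).abs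
    have : |g x - f x| ≤ ε := by
      apply le_of_tendsto ht
      filter_upwards with n
      calc |a x n - f x| ≤ ε * (1 - (1/2:ℝ) ^ n) := hbd n
        _ ≤ ε := by nlinarith [pow_nonneg (by norm_num : (0:ℝ) ≤ 1/2) n]
    rwa [abs_sub_comm]

lemma keybound (g : ℝ → ℝ) (hgadd : ∀ x y, g (x + y) = g x + g y)
    (x : ℝ) (hx : 1 < x) (B1 B2 : ℝ)
    (hb1 : |g (Real.log (x + Real.sqrt (x ^ 2 - 1))) -
      (1 / Real.sqrt (x ^ 2 - 1)) * g x| ≤ B1)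
    (hb2 : |g (Real.log ((2*x^2-1) + Real.sqrt ((2*x^2-1) ^ 2 - 1))) -
      (1 / Real.sqrt ((2*x^2-1) ^ 2 - 1)) * g (2*x^2-1)| ≤ B2) :
    |g (x*x) - 2*x*g x| ≤ x * Real.sqrt (x^2-1) * (2*B1 + B2) + |g 1| / 2 := by
  set u := Real.sqrt (x ^ 2 - 1) with hu
  have hx0 : (0:ℝ) < x := by linarith
  have hu2 : u ^ 2 = x ^ 2 - 1 := Real.sq_sqrt (by nlinarith)
  have hu0 : 0 < u := Real.sqrt_pos.mpr (by nlinarith)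
  -- sqrt identity
  have hsq : Real.sqrt ((2*x^2-1) ^ 2 - 1) = 2 * x * u := by
    have h1 : (2*x^2-1) ^ 2 - 1 = (2 * x * u) ^ 2 := by nlinarith [hu2]
    rw [h1, Real.sqrt_sq (by positivity)]
  -- log identity
  have hlog : Real.log ((2*x^2-1) + Real.sqrt ((2*x^2-1) ^ 2 - 1)) =
      2 * Real.log (x + u) := by
    rw [hsq]
    have h1 : (2*x^2-1) + 2 * x * u = (x + u) ^ 2 := by nlinarith [hu2]
    rw [h1, show ((x+u):ℝ) ^ 2 = (x+u)*(x+u) by ring,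
      Real.log_mul (by positivity) (by positivity)]
    ring
  -- additivity facts
  have hg0 : g 0 = 0 := by have := hgadd 0 0; simp at this; linarith
  have hgneg : ∀ t, g (-t) = - g t := by
    intro t; have := hgadd t (-t); simp at this; linarith
  have hgdbl : ∀ t, g (2 * t) = 2 * g t := by
    intro t; have := hgadd t t
    rw [show t + t = 2 * t by ring] at this; linarith
  have hgz : g (2*x^2-1) = 2 * g (x*x) - g 1 := by
    have h1 : g (2*x^2 - 1) = g (2 * (x*x)) + g (-1) := by
      rw [← hgadd]; ring_nf
    rw [h1, hgdbl, hgneg]; ring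
  -- rewrite hb2
  rw [hlog, hsq, hgdbl, hgz] at hb2
  set a := Real.log (x + u) with haa
  set P := g a - (1 / u) * g x with hP
  set Q := 2 * g a - (1 / (2 * x * u)) * (2 * g (x*x) - g 1) with hQ
  have key : g (x*x) - 2*x*g x = (2 * x * u * (2 * P - Q) + g 1) / 2 := by
    rw [hP, hQ]
    field_simp
    ring
  rw [key]
  have h2P : |2 * P - Q| ≤ 2 * B1 + B2 := by
    calc |2 * P - Q| ≤ 2 * |P| + |Q| := by
          have := abs_sub (2 * P) Q
          rw [abs_mul] at this
          simpa using this
      _ ≤ 2 * B1 + B2 := by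
          have h2 : |Q| ≤ B2 := hb2
          have h1 : |P| ≤ B1 := hb1
          linarith
  calc |(2 * x * u * (2 * P - Q) + g 1) / 2|
      ≤ (|2 * x * u * (2 * P - Q)| + |g 1|) / 2 := by
        rw [abs_div, abs_two]
        gcongr
        exact abs_add_le _ _
    _ ≤ (2 * x * u * (2 * B1 + B2) + |g 1|) / 2 := by
        gcongr
        rw [abs_mul]
        have h3 : |2 * x * u| = 2 * x * u := abs_of_pos (by positivity)
        rw [h3]
        have hnn : 0 ≤ 2 * x * u := by positivity
        exact mul_le_mul_of_nonneg_left h2P hnn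
    _ = x * u * (2 * B1 + B2) + |g 1| / 2 := by ring

lemma bridge (ε : ℝ) (f g : ℝ → ℝ) (hfg : ∀ x, |f x - g x| ≤ ε) (t : ℝ)
    (hut : 1 ≤ Real.sqrt (t ^ 2 - 1)) (C : ℝ)
    (hC : |f (Real.log (t + Real.sqrt (t ^ 2 - 1))) -
      (1 / Real.sqrt (t ^ 2 - 1)) * f t| ≤ C) :
    |g (Real.log (t + Real.sqrt (t ^ 2 - 1))) -
      (1 / Real.sqrt (t ^ 2 - 1)) * g t| ≤ C + 2 * ε := by
  set u := Real.sqrt (t ^ 2 - 1) with hu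
  set a := Real.log (t + u) with ha
  have hu0 : 0 < u := lt_of_lt_of_le one_pos hut
  have e : g a - (1/u) * g t =
      (f a - (1/u) * f t) - (f a - g a) + (1/u) * (f t - g t) := by ring
  rw [e]
  have h1 : |f a - g a| ≤ ε := hfg a
  have h2 : |(1/u) * (f t - g t)| ≤ ε := by
    rw [abs_mul]
    have hle : |1/u| ≤ 1 := by
      rw [abs_of_pos (by positivity)]
      rw [div_le_one hu0]
      exact hut
    have := hfg t
    calc |1/u| * |f t - g t| ≤ 1 * ε := by
          apply mul_le_mul hle this (abs_nonneg _) zero_le_one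
      _ = ε := one_mul ε
  calc |f a - (1/u) * f t - (f a - g a) + (1/u) * (f t - g t)|
      ≤ |f a - (1/u) * f t - (f a - g a)| + |(1/u) * (f t - g t)| := abs_add_le _ _
    _ ≤ (|f a - (1/u) * f t| + |f a - g a|) + |(1/u) * (f t - g t)| := by
        gcongr
        exact abs_sub _ _
    _ ≤ C + 2 * ε := by linarith

set_option maxHeartbeats 1000000 in
theorem stmt_19 (ε : ℝ) (hε : 0 < ε) (f : ℝ → ℝ)
    (hf : ∀ x y : ℝ, |f (x + y) - f x - f y| ≤ ε)
    (hlb : LocallyBoundedOn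
      (fun x : ℝ => f (Real.log (x + Real.sqrt (x ^ 2 - 1))) -
        (1 / Real.sqrt (x ^ 2 - 1)) * f x)
      (Set.Ioi 1)) :
    ∃ (l : ℝ) (χ : ℝ → ℝ), IsRealDerivation χ ∧
      ∀ x : ℝ, |f x - (χ x + l * x)| ≤ ε := by
  obtain ⟨g, hgadd, hfg⟩ := hyers ε hε f hf
  have hg0 : g 0 = 0 := by have := hgadd 0 0; simp at this; linarith
  have hgneg : ∀ t, g (-t) = - g t := by
    intro t; have := hgadd t (-t); simp at this; linarith
  have hq := rat_smul_of_additive g hgadd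
  obtain ⟨C₁, h₁⟩ := hlb 2 (by norm_num)
  obtain ⟨C₂, h₂⟩ := hlb 7 (by norm_num)
  rw [nhdsWithin_eq_nhds.mpr (Ioi_mem_nhds (by norm_num))] at h₁ h₂
  rw [Metric.eventually_nhds_iff] at h₁ h₂
  obtain ⟨δ₁, hδ₁, h₁⟩ := h₁
  obtain ⟨δ₂, hδ₂, h₂⟩ := h₂
  set δ := min δ₁ (min (1/2 : ℝ) (δ₂/9)) with hδdef
  have hδ0 : 0 < δ := lt_min hδ₁ (lt_min one_half_pos (by positivity))
  set M₁ := 7 * (2*(C₁+2*ε) + (C₂+2*ε)) + |g 1| / 2 with hM₁def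
  -- local bound on A x = g(x*x) - 2x g x
  have hA : ∀ x : ℝ, |x - 2| < δ → |g (x*x) - 2*x*g x| ≤ M₁ := by
    intro x hxd
    have hd1 : |x - 2| < δ₁ := lt_of_lt_of_le hxd (min_le_left _ _)
    have hdh : |x - 2| < 1/2 :=
      lt_of_lt_of_le hxd (le_trans (min_le_right _ _) (min_le_left _ _))
    have hd9 : |x - 2| < δ₂/9 :=
      lt_of_lt_of_le hxd (le_trans (min_le_right _ _) (min_le_right _ _))
    obtain ⟨lh, rh⟩ := abs_lt.mp hdh
    obtain ⟨l9, r9⟩ := abs_lt.mp hd9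
    have hx1 : 1 < x := by linarith
    have hux1 : 1 ≤ Real.sqrt (x ^ 2 - 1) := by
      rw [Real.one_le_sqrt]; nlinarith
    have hz7 : |(2*x^2-1) - 7| < δ₂ := by
      rw [abs_lt]; constructor <;> nlinarith
    have hz35 : (7:ℝ)/2 ≤ 2*x^2-1 := by nlinarith
    have huz1 : 1 ≤ Real.sqrt ((2*x^2-1) ^ 2 - 1) := by
      rw [Real.one_le_sqrt]; nlinarith [hz35, sq_nonneg (2*x^2-1-7/2)]
    have hb1 := bridge ε f g hfg x hux1 C₁ (h₁ (by rw [Real.dist_eq]; exact hd1))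
    have hb2 := bridge ε f g hfg (2*x^2-1) huz1 C₂
      (h₂ (by rw [Real.dist_eq]; exact hz7))
    have hkey := keybound g hgadd x hx1 _ _ hb1 hb2
    refine hkey.trans ?_
    have hx0 : 0 < x := by linarith
    have hunn : Real.sqrt (x^2-1) ≤ x := by
      have : Real.sqrt (x^2 - 1) ≤ Real.sqrt (x^2) := Real.sqrt_le_sqrt (by nlinarith)
      rwa [Real.sqrt_sq hx0.le] at this
    have hge : 0 ≤ 2*(C₁+2*ε) + (C₂+2*ε) := by
      have g1 := (abs_nonneg _).trans hb1
      have g2 := (abs_nonneg _).trans hb2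
      linarith
    have hxu : x * Real.sqrt (x^2-1) ≤ 7 := by
      nlinarith [Real.sqrt_nonneg (x^2-1)]
    have := mul_le_mul_of_nonneg_right hxu hge
    rw [hM₁def]
    linarith
  have hM₁0 : 0 ≤ M₁ := le_trans (abs_nonneg _) (hA 2 (by simpa using hδ0))
  have hδhalf : δ ≤ 1/2 := le_trans (min_le_right _ _) (min_le_left _ _)
  -- global quadratic bound
  have hApos : ∀ t : ℝ, 0 < t → |g (t*t) - 2*t*g t| ≤ M₁ * (t*t) := by
    intro t ht
    obtain ⟨q, hq1, hq2⟩ := exists_rat_btwn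
      (show (2-δ)/t < (2+δ)/t by rw [div_lt_div_iff₀ ht ht]; nlinarith)
    rw [div_lt_iff₀ ht] at hq1
    rw [lt_div_iff₀ ht] at hq2
    have hqd : |(q:ℝ)*t - 2| < δ := abs_lt.mpr ⟨by linarith, by linarith⟩
    have hAq := hA ((q:ℝ)*t) hqd
    have hscale : g (((q:ℝ)*t)*((q:ℝ)*t)) - 2*((q:ℝ)*t)*g ((q:ℝ)*t) =
        (q:ℝ)^2 * (g (t*t) - 2*t*g t) := by
      have e1 : ((q:ℝ)*t)*((q:ℝ)*t) = ((q*q : ℚ):ℝ) * (t*t) := by push_cast; ring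
      rw [e1, hq (q*q) (t*t), hq q t]; push_cast; ring
    rw [hscale] at hAq
    rw [abs_mul] at hAq
    rw [abs_of_nonneg (sq_nonneg ((q:ℝ)))] at hAq
    have h32 : (3:ℝ)/2 ≤ (q:ℝ)*t := by linarith
    have h1le : 1 ≤ ((q:ℝ)*t)^2 := by nlinarith [h32]
    nlinarith [mul_le_mul_of_nonneg_right hAq (mul_pos ht ht).le,
      abs_nonneg (g (t*t) - 2*t*g t), mul_pos ht ht]
  have hAall : ∀ t : ℝ, |g (t*t) - 2*t*g t| ≤ M₁ * (t*t) := by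
    intro t
    rcases lt_trichotomy t 0 with h|h|h
    · have := hApos (-t) (by linarith)
      rw [show (-t)*(-t) = t*t by ring, hgneg t] at this
      have e : g (t*t) - 2*(-t)*(-g t) = g (t*t) - 2*t*g t := by ring
      rwa [e] at this
    · subst h; simp [hg0]
    · exact hApos t h
  -- multiplicative structure
  have hmul : ∀ x y : ℝ, g (x*y) = x * g y + (g x - x * g 1) * y := by
    intro x
    set k : ℝ → ℝ := fun y => g (x*y) - x * g y with hk
    have hkadd : ∀ y z, k (y+z) = k y + k z := by
      intro y z; simp only [hk, mul_add, hgadd]; ring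
    have hkbd : ∀ y, |y| < 1 →
        |k y| ≤ M₁*((|x|+1)^2 + x*x + 1)/2 + |g x| := by
      intro y hy
      have e1 : g ((x+y)*(x+y)) = g (x*x) + g (x*y) + g (x*y) + g (y*y) := by
        rw [show (x+y)*(x+y) = x*x + (x*y + (x*y + y*y)) by ring,
          hgadd, hgadd, hgadd]
        ring
      have e2 : g (x+y) = g x + g y := hgadd x y
      have ekey : k y =
          ((g ((x+y)*(x+y)) - 2*(x+y)*g (x+y)) - (g (x*x) - 2*x*g x)
            - (g (y*y) - 2*y*g y))/2 + y * g x := by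
        simp only [hk]
        rw [e1, e2]; ring
      have h1 := hAall (x+y)
      have h2 := hAall x
      have h3 := hAall y
      have hb1 : |k y| ≤ (|g ((x+y)*(x+y)) - 2*(x+y)*g (x+y)|
          + |g (x*x) - 2*x*g x| + |g (y*y) - 2*y*g y|)/2 + |y| * |g x| := by
        rw [ekey]
        calc |((g ((x+y)*(x+y)) - 2*(x+y)*g (x+y)) - (g (x*x) - 2*x*g x)
            - (g (y*y) - 2*y*g y))/2 + y * g x|
            ≤ |((g ((x+y)*(x+y)) - 2*(x+y)*g (x+y)) - (g (x*x) - 2*x*g x)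
            - (g (y*y) - 2*y*g y))/2| + |y * g x| := abs_add_le _ _
          _ ≤ _ := by
              rw [abs_div, abs_mul, abs_two]
              gcongr
              calc |(g ((x+y)*(x+y)) - 2*(x+y)*g (x+y)) - (g (x*x) - 2*x*g x)
                  - (g (y*y) - 2*y*g y)|
                  ≤ |(g ((x+y)*(x+y)) - 2*(x+y)*g (x+y)) - (g (x*x) - 2*x*g x)|
                    + |g (y*y) - 2*y*g y| := abs_sub _ _
                _ ≤ _ := by
                    gcongr
                    exact abs_sub _ _
      have hsq1 : (x+y)*(x+y) ≤ (|x|+1)^2 := by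
        nlinarith [abs_add_le x y, le_abs_self y, abs_nonneg x, abs_nonneg y,
          le_abs_self (x+y), neg_abs_le (x+y), sq_abs (x+y)]
      have hsq2 : x*x ≤ x*x := le_rfl
      have hsq3 : y*y ≤ 1 := by nlinarith [le_abs_self y, neg_abs_le y, abs_nonneg y]
      have hy1 : |y| * |g x| ≤ |g x| := by
        nlinarith [abs_nonneg (g x), abs_nonneg y]
      have hmm1 : M₁ * ((x+y)*(x+y)) ≤ M₁ * (|x|+1)^2 :=
        mul_le_mul_of_nonneg_left hsq1 hM₁0
      have hmm3 : M₁ * (y*y) ≤ M₁ * 1 := mul_le_mul_of_nonneg_left hsq3 hM₁0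
      calc |k y| ≤ (|g ((x+y)*(x+y)) - 2*(x+y)*g (x+y)|
          + |g (x*x) - 2*x*g x| + |g (y*y) - 2*y*g y|)/2 + |y| * |g x| := hb1
        _ ≤ (M₁ * (|x|+1)^2 + M₁ * (x*x) + M₁ * 1)/2 + |g x| := by
            have := h1; have := h2; have := h3
            gcongr <;> linarith
        _ = M₁*((|x|+1)^2 + x*x + 1)/2 + |g x| := by ring
    have hlin := linear_of_additive_bounded k hkadd
      (M₁*((|x|+1)^2 + x*x + 1)/2 + |g x|) 1 one_pos hkbd
    intro y
    have h1 := hlin y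
    have hk1 : k 1 = g x - x * g 1 := by simp only [hk, mul_one]
    simp only [hk, mul_one] at h1
    linarith [h1]
  refine ⟨g 1, fun t => g t - g 1 * t, ⟨?_, ?_⟩, ?_⟩
  · intro a b; simp only; rw [hgadd]; ring
  · intro a b; simp only; rw [hmul a b]; ring
  · intro t
    simp only
    have : f t - ((g t - g 1 * t) + g 1 * t) = f t - g t := by ring
    rw [this]
    exact hfg t
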